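/- For every n ≥ 1, the set {P ∈ SO(n) : det(I + P) = 0} is a null set with respect to the Haar probability measure on the compact topological group SO(n). -/

import Mathlib

open Matrix MeasureTheory Filter Topology

noncomputable instance {n : ℕ} : MeasurableSpace (Matrix (Fin n) (Fin n) ℝ) := borel _
instance {n : ℕ} : BorelSpace (Matrix (Fin n) (Fin n) ℝ) := ⟨rfl⟩

namespace SOH

variable {n : ℕ}

abbrev Mat (n : ℕ) := Matrix (Fin n) (Fin n) ℝ

def rot (i j : Fin n) (a b : ℝ) : Mat n :=
  1 + a • (single i i 1 + single j j 1)
    + b • (single j i 1 - single i j 1)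

lemma rot_zero (i j : Fin n) : rot i j 0 0 = 1 := by simp [rot]

lemma rot_mul {i j : Fin n} (hij : i ≠ j) (a b c d : ℝ) :
    rot i j a b * rot i j c d
      = rot i j (a + c + a*c - b*d) (b + d + a*d + b*c) := by
  have e0 : ∀ (p q r s : Fin n) (c d : ℝ), q ≠ r →
      single p q c * single r s d = 0 :=
    fun p q r s c d h => single_mul_single_of_ne c p q r h d
  simp only [rot, add_mul, mul_add, sub_mul, mul_sub, one_mul, mul_one,
    smul_mul_assoc, mul_smul_comm, smul_add, smul_sub, smul_smul,
    single_mul_single_same, ne_eq, e0, hij, hij.symm,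
    not_false_iff, smul_zero]
  module

lemma rot_transpose (i j : Fin n) (a b : ℝ) :
    (rot i j a b)ᵀ = rot i j a (-b) := by
  have h : ∀ (k l : Fin n), (single k l (1:ℝ))ᵀ = single l k 1 := by
    intro k l
    ext x y
    simp [single, transpose_apply, and_comm]
  simp only [rot, transpose_add, transpose_smul, transpose_sub, transpose_one, h]
  module

lemma rot_mul_apply_i {i j : Fin n} (hij : i ≠ j) (a b : ℝ) (Q : Mat n) (k : Fin n) :
    (rot i j a b * Q) i k = (1 + a) * Q i k - b * Q j k := by
  simp only [rot, add_mul, sub_mul, smul_mul_assoc, one_mul,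
    Matrix.add_apply, Matrix.sub_apply, Matrix.smul_apply, smul_sub, smul_eq_mul,
    single_mul_apply_same,
    single_mul_apply_of_ne (h := hij)]
  ring

lemma rot_mul_apply_j {i j : Fin n} (hij : i ≠ j) (a b : ℝ) (Q : Mat n) (k : Fin n) :
    (rot i j a b * Q) j k = b * Q i k + (1 + a) * Q j k := by
  simp only [rot, add_mul, sub_mul, smul_mul_assoc, one_mul,
    Matrix.add_apply, Matrix.sub_apply, Matrix.smul_apply, smul_sub, smul_eq_mul,
    single_mul_apply_same,
    single_mul_apply_of_ne (h := hij.symm)]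
  ring

lemma rot_mul_apply_other {i j l : Fin n} (hli : l ≠ i) (hlj : l ≠ j)
    (a b : ℝ) (Q : Mat n) (k : Fin n) :
    (rot i j a b * Q) l k = Q l k := by
  simp only [rot, add_mul, sub_mul, smul_mul_assoc, one_mul,
    Matrix.add_apply, Matrix.sub_apply, Matrix.smul_apply, smul_sub, smul_eq_mul,
    single_mul_apply_of_ne (h := hli),
    single_mul_apply_of_ne (h := hlj)]
  ring

noncomputable def cayc (t : ℝ) : ℝ := (1 - t^2)/(1 + t^2)
noncomputable def cays (t : ℝ) : ℝ := 2*t/(1 + t^2)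

lemma one_add_sq_ne (t : ℝ) : (1 : ℝ) + t^2 ≠ 0 := by positivity

lemma cayc_sq_add_cays_sq (t : ℝ) : cayc t ^ 2 + cays t ^ 2 = 1 := by
  have := one_add_sq_ne t
  unfold cayc cays
  field_simp
  ring

lemma exists_t (x y : ℝ) : ∃ t : ℝ, cays t * x + cayc t * y = 0 := by
  by_cases hy : y = 0
  · exact ⟨0, by simp [cays, cayc, hy]⟩
  · set r := Real.sqrt (x^2 + y^2) with hr
    have hr2 : r^2 = x^2 + y^2 := Real.sq_sqrt (by positivity)
    refine ⟨(x + r)/y, ?_⟩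
    have h1 := one_add_sq_ne ((x + r)/y)
    unfold cays cayc
    field_simp
    linear_combination (-y) * hr2

noncomputable def rmat (i j : Fin n) (t : ℝ) : Mat n :=
  rot i j (cayc t - 1) (cays t)

lemma rmat_zero (i j : Fin n) : rmat i j 0 = 1 := by
  simp [rmat, cayc, cays, rot_zero]

lemma rmat_transpose_mul {i j : Fin n} (hij : i ≠ j) (t : ℝ) :
    (rmat i j t)ᵀ * rmat i j t = 1 := by
  rw [rmat, rot_transpose, rot_mul hij]
  have h := cayc_sq_add_cays_sq t
  have h1 : (cayc t - 1) + (cayc t - 1) + (cayc t - 1)*(cayc t - 1) - (-cays t)*(cays t) = 0 := by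
    nlinarith [h]
  have h2 : (-cays t) + cays t + (cayc t - 1)*(cays t) + (-cays t)*(cayc t - 1) = 0 := by ring
  rw [h1, h2, rot_zero]

lemma continuous_rmat (i j : Fin n) : Continuous fun t => rmat i j t := by
  have hc : Continuous cayc := by
    apply Continuous.div (by continuity) (by continuity)
    exact fun t => one_add_sq_ne t
  have hs : Continuous cays := by
    apply Continuous.div (by continuity) (by continuity)
    exact fun t => one_add_sq_ne t
  unfold rmat rot
  exact (continuous_const.add (((hc.sub continuous_const).smul continuous_const))).add
    (hs.smul continuous_const)

lemma det_rmat {i j : Fin n} (hij : i ≠ j) (t : ℝ) : (rmat i j t).det = 1 := by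
  set f : ℝ → ℝ := fun t => (rmat i j t).det with hf
  have hsq : ∀ t, f t * f t = 1 := by
    intro t
    have := congrArg Matrix.det (rmat_transpose_mul hij t)
    rwa [Matrix.det_mul, Matrix.det_transpose, Matrix.det_one] at this
  have hf0 : f 0 = 1 := by simp [hf, rmat_zero]
  by_contra hne
  have ht : f t = -1 := by
    rcases mul_self_eq_one_iff.1 (hsq t) with h | h
    · exact absurd h hne
    · exact h
  have hcont : ContinuousOn f (Set.uIcc 0 t) :=
    ((continuous_rmat i j).matrix_det).continuousOn
  have h0m : (0 : ℝ) ∈ Set.uIcc (f 0) (f t) := by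
    rw [hf0, ht]
    simp [Set.mem_uIcc]
  obtain ⟨z, _, hz⟩ := intermediate_value_uIcc hcont h0m
  have := hsq z
  rw [hz] at this
  norm_num at this

/-! ### words -/

def Plane (n : ℕ) := {p : Fin n × Fin n // p.1 ≠ p.2}

instance : Countable (Plane n) := by unfold Plane; infer_instance

noncomputable def letter (x : Plane n × ℝ) : Mat n := rmat x.1.1.1 x.1.1.2 x.2

lemma letter_transpose_mul (x : Plane n × ℝ) : (letter x)ᵀ * letter x = 1 :=
  rmat_transpose_mul x.1.2 x.2

lemma det_letter (x : Plane n × ℝ) : (letter x).det = 1 := det_rmat x.1.2 x.2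

noncomputable def wprod (L : List (Plane n × ℝ)) : Mat n := (L.map letter).prod

lemma wprod_nil : wprod ([] : List (Plane n × ℝ)) = 1 := rfl

lemma wprod_cons (x : Plane n × ℝ) (L : List (Plane n × ℝ)) :
    wprod (x :: L) = letter x * wprod L := by
  simp [wprod]

lemma wprod_append (L₁ L₂ : List (Plane n × ℝ)) :
    wprod (L₁ ++ L₂) = wprod L₁ * wprod L₂ := by
  simp [wprod]

lemma orth_step {g R : Mat n} (hg : gᵀ * g = 1) (hR : Rᵀ * R = 1) :
    (g * R)ᵀ * (g * R) = 1 := by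
  rw [transpose_mul, Matrix.mul_assoc, ← Matrix.mul_assoc gᵀ g R, hg, Matrix.one_mul, hR]

/-! ### QR via Givens -/

def Good (k : ℕ) (Q : Mat n) : Prop :=
  ∀ i : Fin n, (i:ℕ) < k → ∀ l : Fin n, Q l i = if l = i then 1 else 0

lemma good_rot {k : ℕ} {i j : Fin n} (hij : i ≠ j) (hik : k ≤ (i:ℕ)) (hjk : k ≤ (j:ℕ))
    (a b : ℝ) {Q : Mat n} (hQ : Good k Q) : Good k (rot i j a b * Q) := by
  intro m hm l
  have him : i ≠ m := by intro h; rw [h] at hik; omega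
  have hjm : j ≠ m := by intro h; rw [h] at hjk; omega
  rcases eq_or_ne l i with h | hli
  · rw [h, rot_mul_apply_i hij, hQ m hm i, hQ m hm j, if_neg him, if_neg hjm]
    ring
  rcases eq_or_ne l j with h | hlj
  · rw [h, rot_mul_apply_j hij, hQ m hm i, hQ m hm j, if_neg him, if_neg hjm]
    ring
  · rw [rot_mul_apply_other hli hlj, hQ m hm l]

lemma col_above {R : Mat n} (horth : Rᵀ * R = 1) {p : Fin n} {k : ℕ} (hG : Good k R)
    {j : Fin n} (hjk : (j:ℕ) < k) (hjp : j ≠ p) : R j p = 0 := by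
  have h := congrFun (congrFun horth j) p
  rw [Matrix.mul_apply, Matrix.one_apply, if_neg hjp] at h
  have : ∀ l, Rᵀ j l * R l p = (if l = j then 1 else 0) * R l p := by
    intro l
    rw [Matrix.transpose_apply, hG j hjk l]
  rw [Finset.sum_congr rfl (fun l _ => this l)] at h
  simpa using h

lemma pivot_sq {R : Mat n} (horth : Rᵀ * R = 1) {p : Fin n}
    (hcol : ∀ l : Fin n, l ≠ p → R l p = 0) : R p p * R p p = 1 := by
  have h := congrFun (congrFun horth p) p
  rw [Matrix.mul_apply, Matrix.one_apply, if_pos rfl] at h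
  have : ∀ l, Rᵀ p l * R l p = (if l = p then R p p * R p p else 0) := by
    intro l
    rcases eq_or_ne l p with rfl | hl
    · simp [Matrix.transpose_apply]
    · simp [Matrix.transpose_apply, hcol l hl, hl]
  rw [Finset.sum_congr rfl (fun l _ => this l)] at h
  simpa using h

/-- zero out entries below the pivot in column `p` -/
lemma zl (p : Fin n) (d : ℕ) :
    ∀ Q : Mat n, Qᵀ * Q = 1 → Good (p:ℕ) Q →
    ∃ L : List (Plane n × ℝ),
      (wprod L * Q)ᵀ * (wprod L * Q) = 1 ∧
      (wprod L * Q).det = Q.det ∧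
      Good (p:ℕ) (wprod L * Q) ∧
      ∀ j : Fin n, (p:ℕ) < (j:ℕ) → (j:ℕ) < (p:ℕ)+1+d → (wprod L * Q) j p = 0 := by
  induction d with
  | zero =>
    intro Q horth hG
    refine ⟨[], ?_, ?_, ?_, ?_⟩
    all_goals rw [wprod_nil, Matrix.one_mul]
    · exact horth
    · exact hG
    · intro j h1 h2
      omega
  | succ d ih =>
    intro Q horth hG
    obtain ⟨L, hRorth, hRdet, hRG, hRz⟩ := ih Q horth hG
    set R := wprod L * Q with hR
    by_cases hn : n ≤ (p:ℕ)+1+d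
    · exact ⟨L, hRorth, hRdet, hRG, fun j h1 h2 => hRz j h1 (by omega)⟩
    · set j₀ : Fin n := ⟨(p:ℕ)+1+d, by omega⟩ with hj₀
      have hj₀v : (j₀:ℕ) = (p:ℕ)+1+d := rfl
      have hpj : p ≠ j₀ := by
        intro h
        have := congrArg Fin.val h
        omega
      obtain ⟨t, ht⟩ := exists_t (R p p) (R j₀ p)
      refine ⟨(⟨(p, j₀), hpj⟩, t) :: L, ?_⟩
      rw [wprod_cons, Matrix.mul_assoc, ← hR]
      have hlo : letter (⟨(p, j₀), hpj⟩, t) = rot p j₀ (cayc t - 1) (cays t) := rfl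
      refine ⟨orth_step (letter_transpose_mul _) hRorth, ?_, ?_, ?_⟩
      · rw [Matrix.det_mul, det_letter, one_mul, hRdet]
      · rw [hlo]
        exact good_rot hpj le_rfl (by omega) _ _ hRG
      · intro j h1 h2
        rcases eq_or_ne j j₀ with rfl | hjj
        · rw [hlo, rot_mul_apply_j hpj]
          calc cays t * R p p + (1 + (cayc t - 1)) * R j₀ p
              = cays t * R p p + cayc t * R j₀ p := by ring
            _ = 0 := ht
        · have hjp : j ≠ p := by
            intro h; subst h; omega
          have hjval : (j:ℕ) < (p:ℕ)+1+d := by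
            have : (j:ℕ) ≠ (j₀:ℕ) := fun h => hjj (Fin.ext h)
            omega
          rw [hlo, rot_mul_apply_other hjp hjj]
          exact hRz j h1 hjval

/-- process one column: from Good p to Good (p+1) -/
lemma process_col (p : Fin n) (Q : Mat n) (horth : Qᵀ * Q = 1) (hdet : Q.det = 1)
    (hG : Good (p:ℕ) Q) :
    ∃ L : List (Plane n × ℝ),
      (wprod L * Q)ᵀ * (wprod L * Q) = 1 ∧ (wprod L * Q).det = 1 ∧
      Good ((p:ℕ)+1) (wprod L * Q) := by
  obtain ⟨L, hRorth, hRdet, hRG, hRz⟩ := zl p n Q horth hG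
  set R := wprod L * Q with hR
  rw [hdet] at hRdet
  have hcol : ∀ l : Fin n, l ≠ p → R l p = 0 := by
    intro l hl
    rcases lt_or_ge ((l:ℕ)) ((p:ℕ)) with h | h
    · exact col_above hRorth hRG h hl
    · have : (p:ℕ) < (l:ℕ) := by
        rcases lt_or_eq_of_le h with h' | h'
        · omega
        · exact absurd (Fin.ext h'.symm) hl
      exact hRz l this (by omega)
  have hgood_succ : ∀ (S : Mat n), Good (p:ℕ) S → (∀ l, S l p = if l = p then 1 else 0) →
      Good ((p:ℕ)+1) S := by
    intro S h1 h2 m hm l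
    rcases lt_or_eq_of_le (Nat.lt_succ_iff.mp hm) with h | h
    · exact h1 m h l
    · have : m = p := Fin.ext h
      subst this
      exact h2 l
  have hpiv := pivot_sq hRorth hcol
  rcases mul_self_eq_one_iff.1 hpiv with hc | hc
  · refine ⟨L, hRorth, hRdet, hgood_succ R hRG ?_⟩
    intro l
    rcases eq_or_ne l p with rfl | hl
    · simp [hc]
    · simp [hcol l hl, hl]
  · -- R p p = -1 : impossible if p is last index, otherwise flip sign
    by_cases hlast : (p:ℕ)+1 < n
    · set j₀ : Fin n := ⟨(p:ℕ)+1, hlast⟩ with hj₀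
      have hj₀v : (j₀:ℕ) = (p:ℕ)+1 := rfl
      have hpj : p ≠ j₀ := by
        intro h
        have := congrArg Fin.val h
        omega
      have hflip : letter (⟨(p, j₀), hpj⟩, 1) * letter (⟨(p, j₀), hpj⟩, 1)
          = rot p j₀ (-2) 0 := by
        have h1 : cayc 1 = 0 := by norm_num [cayc]
        have h2 : cays 1 = 1 := by norm_num [cays]
        show rot p j₀ (cayc 1 - 1) (cays 1) * rot p j₀ (cayc 1 - 1) (cays 1) = _
        rw [h1, h2, rot_mul hpj]
        norm_num
      have hkey : wprod ((⟨(p, j₀), hpj⟩, 1) :: (⟨(p, j₀), hpj⟩, 1) :: L) * Q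
          = rot p j₀ (-2) 0 * R := by
        rw [wprod_cons, wprod_cons, ← hflip]
        simp only [Matrix.mul_assoc, hR]
      refine ⟨(⟨(p, j₀), hpj⟩, 1) :: (⟨(p, j₀), hpj⟩, 1) :: L, ?_⟩
      rw [hkey]
      have horth2 : (rot p j₀ (-2) 0 * R)ᵀ * (rot p j₀ (-2) 0 * R) = 1 := by
        rw [← hflip, Matrix.mul_assoc]
        exact orth_step (letter_transpose_mul _) (orth_step (letter_transpose_mul _) hRorth)
      have hdet2 : (rot p j₀ (-2) 0 * R).det = 1 := by
        rw [← hflip, Matrix.mul_assoc, Matrix.det_mul, Matrix.det_mul, det_letter, hRdet]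
        simp
      have hGrot : Good (p:ℕ) (rot p j₀ (-2) 0 * R) :=
        good_rot hpj le_rfl (by omega) _ _ hRG
      refine ⟨horth2, hdet2, hgood_succ _ hGrot ?_⟩
      intro l
      rcases eq_or_ne l p with rfl | hl
      · rw [rot_mul_apply_i hpj, hc]
        norm_num
      rcases eq_or_ne l j₀ with rfl | hlj
      · rw [rot_mul_apply_j hpj, hcol j₀ hpj.symm]
        simp [if_neg hl]
      · rw [rot_mul_apply_other hl hlj, hcol l hl, if_neg hl]
    · -- p is the last index; determinant forces R p p = 1
      exfalso
      have hdiag : R = Matrix.diagonal (fun l => if l = p then R p p else 1) := by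
        ext l m
        rcases eq_or_ne m p with rfl | hm
        · rcases eq_or_ne l m with rfl | hl
          · simp [Matrix.diagonal]
          · simp [Matrix.diagonal, hcol l hl, hl]
        · have hmv : (m:ℕ) < (p:ℕ) := by
            have h1 : (m:ℕ) ≠ (p:ℕ) := fun h => hm (Fin.ext h)
            have h2 : (m:ℕ) < n := m.isLt
            omega
          rw [hRG m hmv l]
          rcases eq_or_ne l m with rfl | hl
          · simp only [Matrix.diagonal, Matrix.of_apply, if_pos rfl]
            rw [if_neg hm]
          · simp [Matrix.diagonal, hl]
      rw [hdiag, Matrix.det_diagonal] at hRdet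
      rw [Finset.prod_ite_eq' Finset.univ p (fun _ => R p p)] at hRdet
      simp at hRdet
      rw [hc] at hRdet
      norm_num at hRdet

lemma main_qr (m : ℕ) : ∀ (k : ℕ), n ≤ k + m → ∀ Q : Mat n, Qᵀ * Q = 1 → Q.det = 1 →
    Good k Q → ∃ L : List (Plane n × ℝ), wprod L * Q = 1 := by
  induction m with
  | zero =>
    intro k hk Q horth hdet hG
    refine ⟨[], ?_⟩
    rw [wprod_nil, Matrix.one_mul]
    ext l i
    rw [hG i (by omega) l, Matrix.one_apply]
  | succ m ih =>
    intro k hk Q horth hdet hG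
    by_cases hn : n ≤ k + m
    · exact ih k hn Q horth hdet hG
    · have hkn : k < n := by omega
      set p : Fin n := ⟨k, hkn⟩ with hp
      obtain ⟨L₁, h1, h2, h3⟩ := process_col p Q horth hdet hG
      obtain ⟨L₂, hL₂⟩ := ih (k+1) (by omega) (wprod L₁ * Q) h1 h2 h3
      exact ⟨L₂ ++ L₁, by rw [wprod_append, Matrix.mul_assoc, hL₂]⟩

lemma qr (Q : Mat n) (horth : Qᵀ * Q = 1) (hdet : Q.det = 1) :
    ∃ L : List (Plane n × ℝ), wprod L * Q = 1 :=
  main_qr n 0 (by omega) Q horth hdet (fun i hi => by omega)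


/-! ### analyticity -/

lemma analytic_cayc : AnalyticOnNhd ℝ cayc Set.univ := by
  apply AnalyticOnNhd.div
  · exact analyticOnNhd_const.sub (analyticOnNhd_id.pow 2)
  · exact analyticOnNhd_const.add (analyticOnNhd_id.pow 2)
  · exact fun t _ => one_add_sq_ne t

lemma analytic_cays : AnalyticOnNhd ℝ cays Set.univ := by
  apply AnalyticOnNhd.div
  · exact analyticOnNhd_const.mul analyticOnNhd_id
  · exact analyticOnNhd_const.add (analyticOnNhd_id.pow 2)
  · exact fun t _ => one_add_sq_ne t

lemma analytic_det {M : ℝ → Mat n}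
    (h : ∀ a b : Fin n, AnalyticOnNhd ℝ (fun t => M t a b) Set.univ) :
    AnalyticOnNhd ℝ (fun t => (M t).det) Set.univ := by
  have hd : (fun t => (M t).det)
      = fun t => ∑ σ : Equiv.Perm (Fin n), (Equiv.Perm.sign σ : ℝ) * ∏ l, M t (σ l) l :=
    funext fun t => Matrix.det_apply' (M t)
  rw [hd]
  exact Finset.analyticOnNhd_fun_sum _ fun σ _ =>
    analyticOnNhd_const.mul (Finset.analyticOnNhd_fun_prod _ fun l _ => h (σ l) l)

lemma analytic_aux {i j : Fin n} (C D : Mat n) :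
    AnalyticOnNhd ℝ (fun t => (1 + C * (rmat i j t * D)).det) Set.univ := by
  set Pi : Mat n := single i i 1 + single j j 1 with hPi
  set Am : Mat n := single j i 1 - single i j 1 with hAm
  have hdec : ∀ t, (1 + C * (rmat i j t * D))
      = (1 + C*D) + (cayc t - 1) • (C*(Pi*D)) + cays t • (C*(Am*D)) := by
    intro t
    rw [rmat, rot, hPi, hAm]
    simp only [add_mul, mul_add, one_mul, smul_mul_assoc, mul_smul_comm]
    module
  apply analytic_det
  intro a b
  have he : (fun t => (1 + C * (rmat i j t * D)) a b)
      = fun t => (1 + C*D) a b + (cayc t - 1) * ((C*(Pi*D)) a b)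
          + cays t * ((C*(Am*D)) a b) := by
    funext t
    rw [hdec t]
    simp [Matrix.add_apply, Matrix.smul_apply, smul_eq_mul]
  rw [he]
  exact ((analyticOnNhd_const.add ((analytic_cayc.sub analyticOnNhd_const).mul
    analyticOnNhd_const))).add (analytic_cays.mul analyticOnNhd_const)

lemma wprod_singleton (x : Plane n × ℝ) : wprod [x] = letter x := by
  simp [wprod]

lemma det_one_add_one_ne : ((1 : Mat n) + 1).det ≠ 0 := by
  have h : ((1 : Mat n) + 1) = (2 : ℝ) • (1 : Mat n) := by
    rw [two_smul]
  rw [h, Matrix.det_smul, Matrix.det_one]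
  simp only [mul_one, Fintype.card_fin]
  positivity

end SOH

open SOH in
/-- For every `n ≥ 1`, the set `{P ∈ SO(n) : det (I + P) = 0}` is a null set with respect
to the Haar probability measure on the compact topological group `SO(n)`. Here the Haar
probability measure is encoded as a Borel probability measure `μ` on the space of real
`n × n` matrices that is supported on `SO(n)` and invariant under left translation by
every element of `SO(n)`. -/
theorem haar_null_det_one_add_eq_zero (n : ℕ) (hn : 1 ≤ n)
    (μ : Measure (Matrix (Fin n) (Fin n) ℝ)) [IsProbabilityMeasure μ]
    (hsupp : μ {P | ¬(Pᵀ * P = 1 ∧ P.det = 1)} = 0)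
    (hinv : ∀ g : Matrix (Fin n) (Fin n) ℝ, gᵀ * g = 1 → g.det = 1 →
      Measure.map (fun P => g * P) μ = μ) :
    μ {P | (1 + P).det = 0} = 0 := by
  classical
  set T : ℕ → Set (Matrix (Fin n) (Fin n) ℝ) := fun j =>
    {P | ∀ L : List (Plane n × ℝ), L.length ≤ j → (1 + wprod L * P).det = 0} with hT
  have hTclosed : ∀ j, IsClosed (T j) := by
    intro j
    have he : T j = ⋂ (L : List (Plane n × ℝ)), ⋂ (_ : L.length ≤ j),
        {P | (1 + wprod L * P).det = 0} := by
      ext P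
      simp [hT, Set.mem_iInter]
    rw [he]
    refine isClosed_iInter fun L => isClosed_iInter fun _ => ?_
    exact isClosed_eq
      ((continuous_const.add (continuous_const.matrix_mul continuous_id)).matrix_det)
      continuous_const
  have hTmeas : ∀ j, MeasurableSet (T j) := fun j => (hTclosed j).measurableSet
  have key : ∀ (j : ℕ) (p : Plane n),
      μ (T j \ {P | ∀ t : ℝ, rmat p.1.1 p.1.2 t * P ∈ T j}) = 0 := by
    intro j p
    set Tp : Set (Matrix (Fin n) (Fin n) ℝ) :=
      {P | ∀ t : ℝ, rmat p.1.1 p.1.2 t * P ∈ T j} with hTpdef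
    have hTpm : MeasurableSet Tp := by
      have he : Tp = ⋂ t : ℝ, (fun P => rmat p.1.1 p.1.2 t * P) ⁻¹' (T j) := by
        ext P
        simp [hTpdef, Set.mem_iInter, Set.mem_preimage]
      rw [he]
      exact (isClosed_iInter fun t =>
        (hTclosed j).preimage (continuous_const.matrix_mul continuous_id)).measurableSet
    have hsub : Tp ⊆ T j := by
      intro P hP
      have h0 := hP 0
      rwa [rmat_zero, Matrix.one_mul] at h0
    set A : ℕ → Set (Matrix (Fin n) (Fin n) ℝ) :=
      fun k => (fun P => rmat p.1.1 p.1.2 (1/((k:ℝ)+1)) * P) ⁻¹' (T j) with hA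
    have hAmeas : ∀ k, MeasurableSet (A k) := fun k =>
      (hTmeas j).preimage (continuous_const.matrix_mul continuous_id).measurable
    have hAmu : ∀ k, μ (A k) = μ (T j) := by
      intro k
      have hg := hinv (rmat p.1.1 p.1.2 (1/((k:ℝ)+1)))
        (rmat_transpose_mul p.2 _) (det_rmat p.2 _)
      conv_rhs => rw [← hg]
      have hm : Measurable fun P : Matrix (Fin n) (Fin n) ℝ =>
          rmat p.1.1 p.1.2 (1/((k:ℝ)+1)) * P :=
        (continuous_const.matrix_mul continuous_id).measurable
      rw [Measure.map_apply hm (hTmeas j)]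
    set C : ℕ → Set (Matrix (Fin n) (Fin n) ℝ) :=
      fun N => ⋃ (k) (_ : N ≤ k), A k with hC
    have hCanti : Antitone C := by
      intro N M h x hx
      simp only [hC, Set.mem_iUnion] at hx ⊢
      obtain ⟨k, hk, hxk⟩ := hx
      exact ⟨k, le_trans h hk, hxk⟩
    have hCnm : ∀ N, NullMeasurableSet (C N) μ := fun N =>
      (MeasurableSet.iUnion fun k => MeasurableSet.iUnion fun _ => hAmeas k).nullMeasurableSet
    have hCmu : ∀ N, μ (T j) ≤ μ (C N) := by
      intro N
      rw [← hAmu N]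
      apply measure_mono
      intro x hx
      simp only [hC, Set.mem_iUnion]
      exact ⟨N, le_rfl, hx⟩
    have hBT : (⋂ N, C N) ⊆ Tp := by
      intro P hP t L hL
      have hfa := analytic_aux (i := p.1.1) (j := p.1.2) (wprod L) P
      have hfreq0 : ∃ᶠ k : ℕ in Filter.atTop,
          (1 + wprod L * (rmat p.1.1 p.1.2 (1/((k:ℝ)+1)) * P)).det = 0 := by
        rw [Filter.frequently_atTop]
        intro N
        have hPC := Set.mem_iInter.1 hP N
        simp only [hC, Set.mem_iUnion] at hPC
        obtain ⟨k, hk, hk2⟩ := hPC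
        exact ⟨k, hk, hk2 L hL⟩
      have hu : Filter.Tendsto (fun k : ℕ => 1/((k:ℝ)+1)) Filter.atTop (𝓝[≠] (0:ℝ)) := by
        apply tendsto_nhdsWithin_of_tendsto_nhds_of_eventually_within
        · exact tendsto_one_div_add_atTop_nhds_zero_nat
        · refine Filter.Eventually.of_forall fun k => ?_
          have : (0:ℝ) < 1/((k:ℝ)+1) := by positivity
          simp only [Set.mem_compl_iff, Set.mem_singleton_iff]
          exact ne_of_gt this
      have hfreq : ∃ᶠ s in 𝓝[≠] (0:ℝ),
          (1 + wprod L * (rmat p.1.1 p.1.2 s * P)).det = 0 :=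
        hu.frequently hfreq0
      have hEq := hfa.eqOn_zero_of_preconnected_of_frequently_eq_zero
        isPreconnected_univ (Set.mem_univ 0) hfreq
      have hz := hEq (Set.mem_univ t)
      simpa using hz
    have hBmu : μ (T j) ≤ μ Tp := by
      calc μ (T j) ≤ ⨅ N, μ (C N) := le_iInf hCmu
        _ = μ (⋂ N, C N) := (hCanti.measure_iInter hCnm ⟨0, measure_ne_top μ _⟩).symm
        _ ≤ μ Tp := measure_mono hBT
    rw [measure_diff hsub hTpm.nullMeasurableSet (measure_ne_top μ Tp)]
    exact tsub_eq_zero_of_le hBmu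
  have hstep : ∀ j, μ (T j \ T (j+1)) = 0 := by
    intro j
    have hsub2 : T j \ T (j+1) ⊆
        ⋃ p : Plane n, (T j \ {P | ∀ t : ℝ, rmat p.1.1 p.1.2 t * P ∈ T j}) := by
      intro P hP
      rcases hP with ⟨hP1, hP2⟩
      by_contra hcon
      simp only [Set.mem_iUnion, not_exists] at hcon
      have hall : ∀ (p : Plane n) (t : ℝ), rmat p.1.1 p.1.2 t * P ∈ T j := by
        intro p
        have hc := hcon p
        rw [Set.mem_diff] at hc
        push_neg at hc
        exact hc hP1
      apply hP2
      intro L hL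
      rcases L.eq_nil_or_concat' with rfl | ⟨L', x, rfl⟩
      · exact hP1 [] (by simp)
      · rw [wprod_append, wprod_singleton, Matrix.mul_assoc]
        have hlen : L'.length ≤ j := by
          simp only [List.length_append, List.length_singleton] at hL
          omega
        exact hall x.1 x.2 L' hlen
    refine measure_mono_null hsub2 (measure_iUnion_null fun p => key j p)
  have hchain : ∀ j, μ (T 0 \ T j) = 0 := by
    intro j
    induction j with
    | zero => simp
    | succ j ih =>
      have hs : T 0 \ T (j+1) ⊆ (T 0 \ T j) ∪ (T j \ T (j+1)) := by
        intro P hP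
        rcases hP with ⟨h1, h2⟩
        by_cases h : P ∈ T j
        · exact Or.inr ⟨h, h2⟩
        · exact Or.inl ⟨h1, h⟩
      exact measure_mono_null hs (measure_union_null ih (hstep j))
  have hUnull : μ (T 0 \ ⋂ j, T j) = 0 := by
    have hs : T 0 \ (⋂ j, T j) ⊆ ⋃ j, (T 0 \ T j) := by
      intro P hP
      rcases hP with ⟨h1, h2⟩
      rw [Set.mem_iInter] at h2
      push_neg at h2
      obtain ⟨j, hj⟩ := h2
      exact Set.mem_iUnion.2 ⟨j, h1, hj⟩
    exact measure_mono_null hs (measure_iUnion_null hchain)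
  have hInter_bad : (⋂ j, T j) ⊆ {P | ¬(Pᵀ * P = 1 ∧ P.det = 1)} := by
    intro P hP hgood
    obtain ⟨L, hL⟩ := qr P hgood.1 hgood.2
    have hmem := Set.mem_iInter.1 hP L.length L le_rfl
    rw [hL] at hmem
    exact det_one_add_one_ne hmem
  have hS : {P : Matrix (Fin n) (Fin n) ℝ | (1 + P).det = 0} = T 0 := by
    ext P
    constructor
    · intro h L hL
      have hnil : L = [] := List.length_eq_zero_iff.mp (Nat.le_zero.mp hL)
      subst hnil
      rw [wprod_nil, Matrix.one_mul]
      exact h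
    · intro h
      have h0 := h [] (by simp)
      rwa [wprod_nil, Matrix.one_mul] at h0
  rw [hS]
  have hle : μ (T 0) ≤ μ (⋂ j, T j) + μ (T 0 \ ⋂ j, T j) := by
    refine (measure_mono ?_).trans (measure_union_le _ _)
    intro P h
    by_cases hi : P ∈ ⋂ j, T j
    · exact Or.inl hi
    · exact Or.inr ⟨h, hi⟩
  rw [hUnull, add_zero] at hle
  have h2 : μ (⋂ j, T j) = 0 := measure_mono_null hInter_bad hsupp
  exact le_antisymm (hle.trans h2.le) (zero_le)
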